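/- arXiv:math/0702516 — 2 statements merged into one kernel-verified Lean document; each statement's English description precedes it below -/
import Mathlib

section
/- Let q = 2p with p ∈ ℕ, p ≥ 2, and λ = 2cos(π/q). With ℓ_n = T_α^n((α−1)λ), r_n = T_α^n(αλ), δ_1 = 1/((α+1)λ), and d_p(x) = d(T_α^{p−1}(x)): (i) if 1/2 < α < 1/λ, then ℓ_0 < r_1 < ℓ_1 < ⋯ < r_{p−2} < ℓ_{p−2} < −δ_1 < r_{p−1} < 0 < ℓ_{p−1} < r_0, and moreover d_p(r_0) = d_p(ℓ_0) + 1 and ℓ_p = r_p; (ii) if α = 1/2, then ℓ_0 < r_1 = ℓ_1 < ⋯ < r_{p−2} = ℓ_{p−2} < −δ_1 < r_{p−1} = ℓ_{p−1} = 0 < r_0; (iii) if α = 1/λ, then ℓ_0 = r_1 < ℓ_1 = r_2 < ⋯ < ℓ_{p−2} = r_{p−1} = −δ_1 < 0 < r_0. -/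
open Set MeasureTheory

/-- The digit function `d(x) = ⌊|1/(xλ)| + 1 - α⌋` of the α-Rosen continued fraction. -/
noncomputable def dfun (lam α x : ℝ) : ℤ := ⌊|1 / (x * lam)| + 1 - α⌋

/-- The α-Rosen continued fraction map `T_α`. -/
noncomputable def Tmap (lam α x : ℝ) : ℝ :=
  if x = 0 then 0 else |1 / x| - lam * (dfun lam α x : ℝ)

/-- The two-dimensional natural extension map `𝒯_α(x, y) = (T_α(x), 1/(d(x)λ + ε(x)y))`. -/
noncomputable def Tnat (lam α : ℝ) (z : ℝ × ℝ) : ℝ × ℝ :=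
  (Tmap lam α z.1, 1 / ((dfun lam α z.1 : ℝ) * lam + Real.sign z.1 * z.2))

namespace Rosen
open Real

noncomputable def ss (c : ℝ) (k : ℤ) : ℝ := Real.sin (k * c)

lemma ss_rec {c lam : ℝ} (hlam : lam = 2 * Real.cos c) (k : ℤ) :
    ss c (k+1) + ss c (k-1) = lam * ss c k := by
  unfold ss
  have h1 : ((k+1 : ℤ) : ℝ) * c = k * c + c := by push_cast; ring
  have h2 : ((k-1 : ℤ) : ℝ) * c = k * c - c := by push_cast; ring
  rw [h1, h2, Real.sin_add, Real.sin_sub, hlam]; ring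

lemma ss_inv (c : ℝ) (k : ℤ) :
    ss c (k+1) * ss c (k-1) = ss c k ^ 2 - ss c 1 ^ 2 := by
  unfold ss
  have h1 : ((k+1 : ℤ) : ℝ) * c = k * c + c := by push_cast; ring
  have h2 : ((k-1 : ℤ) : ℝ) * c = k * c - c := by push_cast; ring
  rw [h1, h2, Real.sin_add, Real.sin_sub]
  have p1 := Real.sin_sq_add_cos_sq ((k:ℝ) * c)
  have p2 := Real.sin_sq_add_cos_sq c
  push_cast
  rw [one_mul]
  nlinarith [p1, p2]

section Main

variable {p : ℕ} {c lam : ℝ}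

lemma ss_pos (hc : 0 < c) (hpc : (p:ℝ) * c = Real.pi / 2)
    {k : ℤ} (h1 : 1 ≤ k) (h2 : k ≤ 2 * p - 1) : 0 < ss c k := by
  apply Real.sin_pos_of_pos_of_lt_pi
  · have : (1:ℝ) ≤ (k:ℝ) := by exact_mod_cast h1
    nlinarith
  · have : (k:ℝ) ≤ 2 * p - 1 := by exact_mod_cast h2
    nlinarith [Real.pi_pos]

lemma ss_nonneg (hc : 0 < c) (hpc : (p:ℝ) * c = Real.pi / 2)
    {k : ℤ} (h1 : 0 ≤ k) (h2 : k ≤ 2 * p - 1) : 0 ≤ ss c k := by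
  rcases eq_or_lt_of_le h1 with h | h
  · simp [ss, ← h]
  · exact le_of_lt (ss_pos hc hpc h h2)

lemma ss_mono (hc : 0 < c) (hpc : (p:ℝ) * c = Real.pi / 2)
    {k : ℤ} (h1 : 0 ≤ k) (h2 : k + 1 ≤ p) : ss c k < ss c (k+1) := by
  have hk : (k:ℝ) + 1 ≤ (p:ℝ) := by exact_mod_cast h2
  have hk0 : (0:ℝ) ≤ (k:ℝ) := by exact_mod_cast h1
  have hpi := Real.pi_pos
  unfold ss
  apply Real.strictMonoOn_sin
  · constructor <;> [nlinarith; nlinarith]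
  · constructor <;> [push_cast; push_cast] <;> nlinarith
  · push_cast; nlinarith

lemma ss_zero (c : ℝ) : ss c 0 = 0 := by simp [ss]

lemma ss_neg_one (c : ℝ) : ss c (-1) = - ss c 1 := by
  unfold ss; push_cast; rw [neg_mul, Real.sin_neg]

lemma ss_p (hpc : (p:ℝ) * c = Real.pi / 2) : ss c p = 1 := by
  unfold ss; rw [show ((p:ℤ):ℝ) = (p:ℝ) by push_cast; ring, hpc, Real.sin_pi_div_two]

lemma ss_pm1 (hpc : (p:ℝ) * c = Real.pi / 2) (hlam : lam = 2 * Real.cos c) :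
    ss c ((p:ℤ) - 1) = lam / 2 := by
  unfold ss
  have : (((p:ℤ) - 1 : ℤ) : ℝ) * c = Real.pi / 2 - c := by push_cast; nlinarith
  rw [this, Real.sin_pi_div_two_sub, hlam]; ring

lemma ss_pp1 (hpc : (p:ℝ) * c = Real.pi / 2) (hlam : lam = 2 * Real.cos c) :
    ss c ((p:ℤ) + 1) = lam / 2 := by
  unfold ss
  have : (((p:ℤ) + 1 : ℤ) : ℝ) * c = Real.pi / 2 + c := by push_cast; nlinarith
  rw [this, Real.sin_add, Real.sin_pi_div_two, Real.cos_pi_div_two, hlam]; ring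

lemma ss_pm2 (hp : 2 ≤ p) (hpc : (p:ℝ) * c = Real.pi / 2) (hlam : lam = 2 * Real.cos c) :
    ss c ((p:ℤ) - 2) = lam ^ 2 / 2 - 1 := by
  have h := ss_rec hlam ((p:ℤ) - 1)
  rw [show ((p:ℤ) - 1) + 1 = (p:ℤ) by ring, show ((p:ℤ) - 1) - 1 = (p:ℤ) - 2 by ring,
    ss_p hpc, ss_pm1 hpc hlam] at h
  nlinarith [h]


lemma lam_facts (hp : 2 ≤ p) (hc : 0 < c) (hpc : (p:ℝ) * c = Real.pi / 2)
    (hlam : lam = 2 * Real.cos c) :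
    0 < lam ∧ lam < 2 ∧ 2 ≤ lam ^ 2 ∧ 1 < lam := by
  have hpi := Real.pi_pos
  have hp2 : (2:ℝ) ≤ (p:ℝ) := by exact_mod_cast hp
  have hc4 : c ≤ Real.pi / 4 := by nlinarith
  have hcpi : c < Real.pi := by nlinarith
  have h1 : Real.cos c < 1 := by
    have := Real.cos_lt_cos_of_nonneg_of_le_pi (le_refl 0) hcpi.le hc
    rwa [Real.cos_zero] at this
  have h2 : Real.cos (Real.pi/4) ≤ Real.cos c := by
    apply Real.cos_le_cos_of_nonneg_of_le_pi hc.le (by nlinarith) hc4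
  rw [Real.cos_pi_div_four] at h2
  have hs2 : Real.sqrt 2 ^ 2 = 2 := Real.sq_sqrt (by norm_num)
  have hs2' : (0:ℝ) ≤ Real.sqrt 2 := Real.sqrt_nonneg 2
  have hsl : Real.sqrt 2 ≤ lam := by rw [hlam]; nlinarith
  refine ⟨by nlinarith, by nlinarith, by nlinarith, by nlinarith⟩

end Main

noncomputable def NN (c x0 : ℝ) (k : ℤ) : ℝ := ss c (k+1) * x0 + ss c k
noncomputable def QQ (c x0 : ℝ) (k : ℤ) : ℝ := ss c (k+1) * x0 + ss c (k+2)

section Main2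

variable {p : ℕ} {c lam α x0 : ℝ}

lemma NN_rec (hlam : lam = 2 * Real.cos c) (x0 : ℝ) (k : ℤ) :
    NN c x0 (k+1) = lam * NN c x0 k - NN c x0 (k-1) := by
  have h1 := ss_rec hlam (k+1)
  have h0 := ss_rec hlam k
  rw [show k+1+1 = k+2 from by ring, show k+1-1 = k from by ring] at h1
  unfold NN
  rw [show k+1+1 = k+2 from by ring, show k-1+1 = k from by ring]
  linear_combination x0 * h1 + h0

lemma QQ_rec (hlam : lam = 2 * Real.cos c) (x0 : ℝ) (k : ℤ) :
    QQ c x0 (k+1) = lam * QQ c x0 k - QQ c x0 (k-1) := by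
  have h1 := ss_rec hlam (k+1)
  have h2 := ss_rec hlam (k+2)
  rw [show k+1+1 = k+2 from by ring, show k+1-1 = k from by ring] at h1
  rw [show k+2+1 = k+3 from by ring, show k+2-1 = k+1 from by ring] at h2
  unfold QQ
  rw [show k+1+1 = k+2 from by ring, show k+1+2 = k+3 from by ring,
    show k-1+1 = k from by ring, show k-1+2 = k+1 from by ring]
  linear_combination x0 * h1 + h2

lemma NN_neg (hp : 2 ≤ p) (hc : 0 < c) (hpc : (p:ℝ) * c = Real.pi / 2)
    (hlam : lam = 2 * Real.cos c) (hx0r : x0 ≤ 1 - lam)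
    {k : ℤ} (h1 : -1 ≤ k) (h2 : k ≤ (p:ℤ) - 2) : NN c x0 k < 0 := by
  have hs1 : 0 < ss c 1 := ss_pos hc hpc (le_refl 1) (by omega)
  rcases eq_or_lt_of_le h1 with h | h
  · unfold NN
    rw [← h]
    norm_num [ss_zero, ss_neg_one]
    exact hs1
  · have hk0 : 0 ≤ k := by omega
    have hm : ss c (k+1) < ss c (k+2) := by
      have := ss_mono hc hpc (k := k+1) (by omega) (by omega)
      rwa [show k+1+1 = k+2 from by ring] at this
    have hrec := ss_rec hlam (k+1)
    rw [show k+1+1 = k+2 from by ring, show k+1-1 = k from by ring] at hrec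
    have hsk1 : 0 < ss c (k+1) := ss_pos hc hpc (by omega) (by omega)
    unfold NN
    nlinarith [hsk1, hm, hrec]

lemma QQ_pos (hp : 2 ≤ p) (hc : 0 < c) (hpc : (p:ℝ) * c = Real.pi / 2)
    (hlam : lam = 2 * Real.cos c) (hx0l : -(lam/2) ≤ x0)
    {k : ℤ} (h1 : 0 ≤ k) (h2 : k ≤ (p:ℤ) - 2) : 0 < QQ c x0 k := by
  have hm1 : ss c k < ss c (k+1) := ss_mono hc hpc h1 (by omega)
  have hm2 : ss c (k+1) < ss c (k+2) := by
    have := ss_mono hc hpc (k := k+1) (by omega) (by omega)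
    rwa [show k+1+1 = k+2 from by ring] at this
  have hrec := ss_rec hlam (k+1)
  rw [show k+1+1 = k+2 from by ring, show k+1-1 = k from by ring] at hrec
  have hsk1 : 0 < ss c (k+1) := ss_pos hc hpc (by omega) (by omega)
  unfold QQ
  nlinarith [hsk1, hm1, hm2, hrec]

lemma NN_pm1 (hpc : (p:ℝ) * c = Real.pi / 2) (hlam : lam = 2 * Real.cos c) (x0 : ℝ) :
    NN c x0 ((p:ℤ) - 1) = x0 + lam / 2 := by
  unfold NN
  rw [show (p:ℤ)-1+1 = (p:ℤ) from by ring, ss_p hpc, ss_pm1 hpc hlam]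
  ring

lemma QQ_pm1 (hpc : (p:ℝ) * c = Real.pi / 2) (hlam : lam = 2 * Real.cos c) (x0 : ℝ) :
    QQ c x0 ((p:ℤ) - 1) = x0 + lam / 2 := by
  unfold QQ
  rw [show (p:ℤ)-1+1 = (p:ℤ) from by ring, show (p:ℤ)-1+2 = (p:ℤ)+1 from by ring,
    ss_p hpc, ss_pp1 hpc hlam]
  ring

lemma QQ_pm2 (hpc : (p:ℝ) * c = Real.pi / 2) (hlam : lam = 2 * Real.cos c) (x0 : ℝ) :
    QQ c x0 ((p:ℤ) - 2) = (lam/2) * x0 + 1 := by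
  unfold QQ
  rw [show (p:ℤ)-2+1 = (p:ℤ)-1 from by ring, show (p:ℤ)-2+2 = (p:ℤ) from by ring,
    ss_p hpc, ss_pm1 hpc hlam]
  try ring

lemma NN_pm2 (hp : 2 ≤ p) (hpc : (p:ℝ) * c = Real.pi / 2) (hlam : lam = 2 * Real.cos c) (x0 : ℝ) :
    NN c x0 ((p:ℤ) - 2) = (lam/2) * x0 + (lam^2/2 - 1) := by
  unfold NN
  rw [show (p:ℤ)-2+1 = (p:ℤ)-1 from by ring, ss_pm1 hpc hlam, ss_pm2 hp hpc hlam]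
  try ring

lemma sinprod (c : ℝ) (a b : ℤ) :
    2 * ss c a * ss c b = Real.cos (((a - b : ℤ) : ℝ) * c) - Real.cos (((a + b : ℤ) : ℝ) * c) := by
  unfold ss
  push_cast
  rw [show ((a:ℝ) - b) * c = a*c - b*c from by ring, show ((a:ℝ) + b) * c = a*c + b*c from by ring,
    Real.cos_sub, Real.cos_add]
  ring

lemma C1eq (hp : 2 ≤ p) (hpc : (p:ℝ) * c = Real.pi / 2) (hlam : lam = 2 * Real.cos c) :
    lam * ss c ((p:ℤ)-2) = (lam^2 - 2) * ss c ((p:ℤ)-1) := by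
  rw [ss_pm2 hp hpc hlam, ss_pm1 hpc hlam]; ring

lemma C1strict (hp : 2 ≤ p) (hc : 0 < c) (hpc : (p:ℝ) * c = Real.pi / 2)
    (hlam : lam = 2 * Real.cos c)
    {k : ℤ} (h1 : 0 ≤ k) (h2 : k ≤ (p:ℤ) - 3) :
    lam * ss c k < (lam^2 - 2) * ss c (k+1) := by
  have e1 : lam * ss c k = 2 * ss c ((p:ℤ)-1) * ss c k := by
    rw [ss_pm1 hpc hlam]; ring
  have e2 : (lam^2-2) * ss c (k+1) = 2 * ss c ((p:ℤ)-2) * ss c (k+1) := by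
    rw [ss_pm2 hp hpc hlam]; ring
  rw [e1, e2, sinprod, sinprod]
  have hid : ((p:ℤ) - 2 + (k+1) : ℤ) = ((p:ℤ) - 1 + k : ℤ) := by ring
  rw [hid]
  have hcos : Real.cos ((((p:ℤ)-1-k : ℤ) : ℝ) * c) < Real.cos ((((p:ℤ)-2-(k+1) : ℤ) : ℝ) * c) := by
    apply Real.cos_lt_cos_of_nonneg_of_le_pi
    · have : (0:ℝ) ≤ ((p:ℤ) - 3 - k : ℤ) := by exact_mod_cast (by omega : (0:ℤ) ≤ (p:ℤ)-3-k)
      push_cast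
      push_cast at this
      nlinarith
    · have hb : ((p:ℤ)-1-k : ℝ) ≤ (p:ℝ) := by
        have : ((p:ℤ)-1-k : ℤ) ≤ (p:ℤ) := by omega
        exact_mod_cast this
      push_cast
      push_cast at hb
      nlinarith [Real.pi_pos]
    · push_cast
      nlinarith
  linarith

lemma C1le (hp : 2 ≤ p) (hc : 0 < c) (hpc : (p:ℝ) * c = Real.pi / 2)
    (hlam : lam = 2 * Real.cos c)
    {k : ℤ} (h1 : 0 ≤ k) (h2 : k ≤ (p:ℤ) - 2) :
    lam * ss c k ≤ (lam^2 - 2) * ss c (k+1) := by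
  rcases eq_or_lt_of_le h2 with h | h
  · rw [h, show (p:ℤ)-2+1 = (p:ℤ)-1 from by ring]
    exact (C1eq hp hpc hlam).le
  · exact (C1strict hp hc hpc hlam h1 (by omega)).le


-- identity for the lower bound of the ℓ-orbit
lemma ell_lb_id (hlam : lam = 2 * Real.cos c) (x0 : ℝ) (k : ℤ) :
    (x0 + lam) * NN c x0 k - NN c x0 (k-1) = ss c (k+1) * (x0^2 + lam*x0 + 1) := by
  have h0 := ss_rec hlam k
  unfold NN
  rw [show k-1+1 = k from by ring]
  linear_combination -h0

lemma quad_pos (hl : 0 < lam) (hl2 : lam < 2) (x0 : ℝ) : 0 < x0^2 + lam*x0 + 1 := by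
  nlinarith [sq_nonneg (x0 + lam/2), sq_nonneg lam]

-- identity for the upper bound of the ℓ-orbit
lemma ell_ub_id (hlam : lam = 2 * Real.cos c) (x0 : ℝ) (k : ℤ) :
    NN c x0 k * (x0 + 2*lam) - NN c x0 (k-1)
      = ss c (k+1) * (x0^2 + 2*lam*x0 + 1) + lam * ss c k := by
  have h0 := ss_rec hlam k
  unfold NN
  rw [show k-1+1 = k from by ring]
  linear_combination -h0

lemma ell_ub_lt (hp : 2 ≤ p) (hc : 0 < c) (hpc : (p:ℝ) * c = Real.pi / 2)
    (hlam : lam = 2 * Real.cos c) (hx0l : -(lam/2) ≤ x0) (hx0r : x0 ≤ 1 - lam)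
    {k : ℤ} (h1 : 0 ≤ k) (h2 : k ≤ (p:ℤ) - 2) (hside : x0 < 1 - lam ∨ k ≤ (p:ℤ) - 3) :
    NN c x0 k * (x0 + 2*lam) - NN c x0 (k-1) < 0 := by
  obtain ⟨hl0, hl2, hlsq, hl1⟩ := lam_facts hp hc hpc hlam
  rw [ell_ub_id hlam]
  have hsk1 : 0 < ss c (k+1) := ss_pos hc hpc (by omega) (by omega)
  have hsk : 0 ≤ ss c k := ss_nonneg hc hpc h1 (by omega)
  have hxa : 0 < x0 + lam := by nlinarith
  rcases hside with h | h
  · have hC := C1le hp hc hpc hlam h1 h2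
    have hsq : (x0 + lam)^2 < 1 := by nlinarith
    have h1' : ss c (k+1) * ((x0+lam)^2 - 1) < 0 :=
      mul_neg_of_pos_of_neg hsk1 (by nlinarith)
    nlinarith [h1', hC]
  · have hC := C1strict hp hc hpc hlam h1 h
    have hsq : (x0 + lam)^2 ≤ 1 := by nlinarith
    have h1' : ss c (k+1) * ((x0+lam)^2 - 1) ≤ 0 :=
      mul_nonpos_of_nonneg_of_nonpos hsk1.le (by nlinarith)
    nlinarith [h1', hC]

lemma ell_ub_eq (hp : 2 ≤ p) (hc : 0 < c) (hpc : (p:ℝ) * c = Real.pi / 2)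
    (hlam : lam = 2 * Real.cos c) (hx0 : x0 = 1 - lam) :
    NN c x0 ((p:ℤ)-2) * (x0 + 2*lam) - NN c x0 ((p:ℤ)-3) = 0 := by
  subst hx0
  have h := ell_ub_id hlam (c := c) (1 - lam) ((p:ℤ)-2)
  rw [show (p:ℤ)-2-1 = (p:ℤ)-3 from by ring] at h
  rw [h, show (p:ℤ)-2+1 = (p:ℤ)-1 from by ring]
  have hC := C1eq hp hpc hlam
  linear_combination hC

-- lower bound for the r-orbit
lemma r_lb (hp : 2 ≤ p) (hc : 0 < c) (hpc : (p:ℝ) * c = Real.pi / 2)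
    (hlam : lam = 2 * Real.cos c) (hx0l : -(lam/2) ≤ x0) (hx0r : x0 ≤ 1 - lam)
    {k : ℤ} (h1 : 1 ≤ k) (h2 : k ≤ (p:ℤ) - 2) :
    (x0 + lam) * QQ c x0 k ≤ QQ c x0 (k-1) := by
  obtain ⟨hl0, hl2, hlsq, hl1⟩ := lam_facts hp hc hpc hlam
  have e1 := ss_rec hlam (k+1)
  have e2 := ss_rec hlam (k+2)
  rw [show k+1+1 = k+2 from by ring, show k+1-1 = k from by ring] at e1
  rw [show k+2+1 = k+3 from by ring, show k+2-1 = k+1 from by ring] at e2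
  have hid : QQ c x0 (k-1) - (x0 + lam) * QQ c x0 k
      = -(ss c (k+1) * (x0^2 + 2*lam*x0 + lam^2 - 1) - ss c k * (2*x0 + lam)) := by
    unfold QQ
    rw [show k-1+1 = k from by ring, show k-1+2 = k+1 from by ring]
    linear_combination (-x0 - lam) * e1
  have hsk1 : 0 < ss c (k+1) := ss_pos hc hpc (by omega) (by omega)
  have hsk : 0 ≤ ss c k := ss_nonneg hc hpc (by omega) (by omega)
  have hxa : 0 < x0 + lam := by nlinarith
  have hxb : x0 + lam ≤ 1 := by nlinarith
  have t1 : ss c (k+1) * (x0^2+2*lam*x0+lam^2-1) ≤ 0 :=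
    mul_nonpos_of_nonneg_of_nonpos hsk1.le (by nlinarith)
  have t2 : 0 ≤ ss c k * (2*x0+lam) := mul_nonneg hsk (by nlinarith)
  linarith [hid, t1, t2]

-- upper bound for the r-orbit
lemma r_ub (hp : 2 ≤ p) (hc : 0 < c) (hpc : (p:ℝ) * c = Real.pi / 2)
    (hlam : lam = 2 * Real.cos c) (hx0l : -(lam/2) ≤ x0) (hx0r : x0 ≤ 1 - lam)
    {k : ℤ} (h1 : 1 ≤ k) (h2 : k ≤ (p:ℤ) - 2) :
    QQ c x0 (k-1) < (x0 + 2*lam) * QQ c x0 k := by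
  obtain ⟨hl0, hl2, hlsq, hl1⟩ := lam_facts hp hc hpc hlam
  have e1 := ss_rec hlam (k+1)
  rw [show k+1+1 = k+2 from by ring, show k+1-1 = k from by ring] at e1
  have hid : (x0 + 2*lam) * QQ c x0 k - QQ c x0 (k-1)
      = ss c (k+1) * ((x0+lam)*(x0+2*lam) - 1) - 2 * ss c k * (x0 + lam) := by
    unfold QQ
    rw [show k-1+1 = k from by ring, show k-1+2 = k+1 from by ring]
    linear_combination (x0 + 2*lam) * e1
  have hsk1 : 0 < ss c (k+1) := ss_pos hc hpc (by omega) (by omega)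
  have hsk : 0 ≤ ss c k := ss_nonneg hc hpc (by omega) (by omega)
  have hC := C1le hp hc hpc hlam (k := k) (by omega) h2
  have hxa : 0 < x0 + lam := by nlinarith
  have hxb : x0 + lam ≤ 1 := by nlinarith
  have key : (0:ℝ) < (3*lam+4)*(lam-2)^2 := by nlinarith
  have m1 : (0:ℝ) ≤ x0 + lam/2 := by linarith
  have m2 : (0:ℝ) ≤ x0 + 5*lam/2 := by linarith
  have s1 : lam * ss c k * (2*(x0+lam)) ≤ (lam^2-2) * ss c (k+1) * (2*(x0+lam)) :=
    mul_le_mul_of_nonneg_right hC (by linarith)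
  have s2 : (lam^2-2) * ss c (k+1) * (2*(x0+lam)) ≤ (lam^2-2) * ss c (k+1) * 2 := by
    have hf : 0 ≤ (lam^2-2) * ss c (k+1) := mul_nonneg (by linarith) hsk1.le
    nlinarith [hf]
  have big : 0 < lam * (ss c (k+1) * ((x0+lam)*(x0+2*lam) - 1) - 2 * ss c k * (x0+lam)) := by
    nlinarith [s1, s2, mul_pos hsk1 key,
      mul_nonneg (mul_nonneg (mul_nonneg hl0.le m1) m2) hsk1.le]
  nlinarith [hid, big, hl0]

-- the interleaving determinant Δ
lemma delta_id (hlam : lam = 2 * Real.cos c) (x0 : ℝ) (k : ℤ) :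
    QQ c x0 k * NN c x0 (k-2) - NN c x0 (k-1) * QQ c x0 (k-1)
      = -(ss c 1)^2 * ((x0+lam)^2 - 1) := by
  have e1 := ss_rec hlam (k+1)
  rw [show k+1+1 = k+2 from by ring, show k+1-1 = k from by ring] at e1
  have e2 := ss_rec hlam (k-1)
  rw [show k-1+1 = k from by ring, show k-1-1 = k-2 from by ring] at e2
  have h0 := ss_rec hlam k
  have h3 := ss_inv c k
  unfold QQ NN
  rw [show k-2+1 = k-1 from by ring, show k-1+1 = k from by ring, show k-1+2 = k+1 from by ring]
  have e1' : ss c (k+2) = lam * ss c (k+1) - ss c k := by linarith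
  have e2' : ss c (k-2) = lam * ss c (k-1) - ss c k := by linarith
  rw [e1', e2']
  linear_combination (x0^2 + 2*lam*x0 + lam^2 - 1) * h3 + (-2*ss c k*x0 - lam*ss c k) * h0

-- the interleaving determinant E
lemma e_id (hlam : lam = 2 * Real.cos c) (x0 : ℝ) (k : ℤ) :
    NN c x0 k * QQ c x0 (k-1) - QQ c x0 k * NN c x0 (k-1)
      = (ss c 1)^2 * (2*x0 + lam) := by
  have e1 := ss_rec hlam (k+1)
  rw [show k+1+1 = k+2 from by ring, show k+1-1 = k from by ring] at e1
  have h0 := ss_rec hlam k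
  have h3 := ss_inv c k
  unfold QQ NN
  rw [show k-1+1 = k from by ring, show k-1+2 = k+1 from by ring]
  have e1' : ss c (k+2) = lam * ss c (k+1) - ss c k := by linarith
  rw [e1']
  linear_combination (-2*x0 - lam) * h3 + (ss c (k+1)*x0 + ss c k) * h0


end Main2

lemma Tneg {lam α x : ℝ} (hl0 : 0 < lam) (hx : x < 0)
    (h1 : α ≤ 1/(-x*lam)) (h2 : 1/(-x*lam) < 1+α) :
    Tmap lam α x = -1/x - lam := by
  have hx0 : x ≠ 0 := ne_of_lt hx
  have hxl : x * lam < 0 := mul_neg_of_neg_of_pos hx hl0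
  have habs : |1/(x*lam)| = 1/(-x*lam) := by
    rw [abs_of_nonpos (one_div_nonpos.mpr hxl.le)]
    field_simp
  have habs2 : |1/x| = -1/x := by
    rw [abs_of_nonpos (one_div_nonpos.mpr hx.le)]
    ring
  unfold Tmap dfun
  rw [if_neg hx0, habs, habs2]
  have hd : ⌊1/(-x*lam) + 1 - α⌋ = 1 := by
    rw [Int.floor_eq_iff]
    push_cast
    constructor <;> linarith
  rw [hd]
  push_cast
  ring

lemma Tpos {lam α x : ℝ} (hl0 : 0 < lam) (hx : 0 < x)
    (h1 : α ≤ 1/(x*lam)) (h2 : 1/(x*lam) < 1+α) :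
    Tmap lam α x = 1/x - lam := by
  have hx0 : x ≠ 0 := ne_of_gt hx
  have hxl : 0 < x * lam := mul_pos hx hl0
  have habs : |1/(x*lam)| = 1/(x*lam) := abs_of_nonneg (by positivity)
  have habs2 : |1/x| = 1/x := abs_of_nonneg (by positivity)
  unfold Tmap dfun
  rw [if_neg hx0, habs, habs2]
  have hd : ⌊1/(x*lam) + 1 - α⌋ = 1 := by
    rw [Int.floor_eq_iff]
    push_cast
    constructor <;> linarith
  rw [hd]
  push_cast
  ring

section Main3

variable {p : ℕ} {c lam α x0 : ℝ}

lemma ell_step (hp : 2 ≤ p) (hc : 0 < c) (hpc : (p:ℝ) * c = Real.pi / 2)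
    (hlam : lam = 2 * Real.cos c) (hα : α * lam = x0 + lam)
    (hx0l : -(lam/2) ≤ x0) (hx0r : x0 ≤ 1 - lam)
    {k : ℤ} (hk0 : 0 ≤ k) (hk : k ≤ (p:ℤ)-2) (hside : x0 < 1 - lam ∨ k ≤ (p:ℤ)-3) :
    Tmap lam α (-NN c x0 k / NN c x0 (k-1)) = -NN c x0 (k+1) / NN c x0 k := by
  obtain ⟨hl0, hl2, hlsq, hl1⟩ := lam_facts hp hc hpc hlam
  have hA : NN c x0 k < 0 := NN_neg hp hc hpc hlam hx0r (by omega) hk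
  have hB : NN c x0 (k-1) < 0 := NN_neg hp hc hpc hlam hx0r (by omega) (by omega)
  set A := NN c x0 k with hAdef
  set B := NN c x0 (k-1) with hBdef
  have hxneg : -A/B < 0 := div_neg_of_pos_of_neg (by linarith) hB
  have hAl : A * lam < 0 := mul_neg_of_neg_of_pos hA hl0
  have hq : 0 < x0^2 + lam*x0 + 1 := quad_pos hl0 hl2 x0
  have hss : 0 ≤ ss c (k+1) := ss_nonneg hc hpc (by omega) (by omega)
  have hlb : B ≤ (x0 + lam) * A := by
    have := ell_lb_id hlam (c := c) x0 k
    nlinarith [mul_nonneg hss hq.le]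
  have hub : A * (x0 + 2*lam) < B := by
    have := ell_ub_lt hp hc hpc hlam hx0l hx0r hk0 hk hside
    linarith
  have hrw : -(-A/B) * lam = A * lam / B := by field_simp
  have h1 : α ≤ 1/(-(-A/B)*lam) := by
    rw [hrw, one_div_div, le_div_iff_of_neg hAl]
    calc B ≤ (x0+lam)*A := hlb
    _ = α * (A*lam) := by rw [← hα]; ring
  have h2 : 1/(-(-A/B)*lam) < 1+α := by
    rw [hrw, one_div_div, div_lt_iff_of_neg hAl]
    calc (1+α)*(A*lam) = A * (x0 + 2*lam) := by linear_combination A * hα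
    _ < B := hub
  rw [Tneg hl0 hxneg h1 h2]
  have hrec := NN_rec hlam (c := c) x0 k
  rw [← hAdef, ← hBdef] at hrec
  rw [hrec]
  have hAne : A ≠ 0 := ne_of_lt hA
  have hBne : B ≠ 0 := ne_of_lt hB
  field_simp
  ring

lemma r_step (hp : 2 ≤ p) (hc : 0 < c) (hpc : (p:ℝ) * c = Real.pi / 2)
    (hlam : lam = 2 * Real.cos c) (hα : α * lam = x0 + lam)
    (hx0l : -(lam/2) ≤ x0) (hx0r : x0 ≤ 1 - lam)
    {k : ℤ} (hk0 : 1 ≤ k) (hk : k ≤ (p:ℤ)-2) :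
    Tmap lam α (-QQ c x0 k / QQ c x0 (k-1)) = -QQ c x0 (k+1) / QQ c x0 k := by
  obtain ⟨hl0, hl2, hlsq, hl1⟩ := lam_facts hp hc hpc hlam
  have hA : 0 < QQ c x0 k := QQ_pos hp hc hpc hlam hx0l (by omega) hk
  have hB : 0 < QQ c x0 (k-1) := QQ_pos hp hc hpc hlam hx0l (by omega) (by omega)
  have hlb := r_lb hp hc hpc hlam hx0l hx0r hk0 hk
  have hub := r_ub hp hc hpc hlam hx0l hx0r hk0 hk
  set A := QQ c x0 k with hAdef
  set B := QQ c x0 (k-1) with hBdef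
  have hxneg : -A/B < 0 := div_neg_of_neg_of_pos (by linarith) hB
  have hAl : 0 < A * lam := mul_pos hA hl0
  have hrw : -(-A/B) * lam = A * lam / B := by field_simp
  have h1 : α ≤ 1/(-(-A/B)*lam) := by
    rw [hrw, one_div_div, le_div_iff₀ hAl]
    calc α * (A*lam) = (x0+lam)*A := by rw [← hα]; ring
    _ ≤ B := hlb
  have h2 : 1/(-(-A/B)*lam) < 1+α := by
    rw [hrw, one_div_div, div_lt_iff₀ hAl]
    calc B < (x0 + 2*lam) * A := hub
    _ = (1+α)*(A*lam) := by linear_combination (-A) * hα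
  rw [Tneg hl0 hxneg h1 h2]
  have hrec := QQ_rec hlam (c := c) x0 k
  rw [← hAdef, ← hBdef] at hrec
  rw [hrec]
  have hAne : A ≠ 0 := ne_of_gt hA
  have hBne : B ≠ 0 := ne_of_gt hB
  field_simp
  ring

lemma r_first (hp : 2 ≤ p) (hc : 0 < c) (hpc : (p:ℝ) * c = Real.pi / 2)
    (hlam : lam = 2 * Real.cos c) (hα : α * lam = x0 + lam)
    (hx0l : -(lam/2) ≤ x0) (hx0r : x0 ≤ 1 - lam) :
    Tmap lam α (x0 + lam) = -QQ c x0 1 / QQ c x0 0 := by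
  obtain ⟨hl0, hl2, hlsq, hl1⟩ := lam_facts hp hc hpc hlam
  have hx : 0 < x0 + lam := by nlinarith
  have hxb : x0 + lam ≤ 1 := by nlinarith
  have h1 : α ≤ 1/((x0+lam)*lam) := by
    rw [le_div_iff₀ (by positivity)]
    calc α * ((x0+lam)*lam) = (x0+lam) * (α*lam) := by ring
    _ = (x0+lam) * (x0+lam) := by rw [hα]
    _ ≤ 1 := by nlinarith
  have h2 : 1/((x0+lam)*lam) < 1+α := by
    rw [div_lt_iff₀ (by positivity)]
    have : (1+α)*((x0+lam)*lam) = (x0+2*lam)*(x0+lam) := by nlinarith [hα]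
    rw [this]
    nlinarith
  rw [Tpos hl0 hx h1 h2]
  have hQ0 : 0 < QQ c x0 0 := QQ_pos hp hc hpc hlam hx0l (le_refl 0) (by omega)
  have e0 := ss_rec hlam (1 : ℤ)
  rw [show (1:ℤ)+1 = 2 from by ring, show (1:ℤ)-1 = 0 from by ring, ss_zero] at e0
  have e3 := ss_rec hlam (2 : ℤ)
  rw [show (2:ℤ)+1 = 3 from by ring, show (2:ℤ)-1 = 1 from by ring] at e3
  unfold QQ
  rw [show (0:ℤ)+1 = 1 from by ring, show (0:ℤ)+2 = 2 from by ring,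
    show (1:ℤ)+1 = 2 from by ring, show (1:ℤ)+2 = 3 from by ring]
  rw [div_sub' (ne_of_gt hx), div_eq_div_iff (ne_of_gt hx) ?hne]
  case hne =>
    have : QQ c x0 0 = ss c 1 * x0 + ss c 2 := by
      unfold QQ; rw [show (0:ℤ)+1 = 1 from by ring, show (0:ℤ)+2 = 2 from by ring]
    rw [← this]; exact ne_of_gt hQ0
  linear_combination (x0^2 + lam*x0 + 1) * e0 + (x0 + lam) * e3

lemma ell_formula (hp : 2 ≤ p) (hc : 0 < c) (hpc : (p:ℝ) * c = Real.pi / 2)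
    (hlam : lam = 2 * Real.cos c) (hα : α * lam = x0 + lam)
    (hx0l : -(lam/2) ≤ x0) (hx0r : x0 ≤ 1 - lam) :
    ∀ n : ℕ, (n:ℤ) ≤ (p:ℤ)-1 → ((n:ℤ) ≤ (p:ℤ)-2 ∨ x0 < 1-lam) →
    (Tmap lam α)^[n] x0 = -NN c x0 n / NN c x0 ((n:ℤ)-1) := by
  intro n
  induction n with
  | zero =>
    intro _ _
    have hs1 : 0 < ss c 1 := ss_pos hc hpc (le_refl 1) (by omega)
    have h1 : NN c x0 (((0:ℕ):ℤ)) = ss c 1 * x0 := by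
      unfold NN; norm_num [ss_zero]
    have h2 : NN c x0 (((0:ℕ):ℤ)-1) = -ss c 1 := by
      unfold NN; norm_num [ss_zero, ss_neg_one]
    simp only [Function.iterate_zero, id_eq, h1, h2]
    field_simp
  | succ n ih =>
    intro hn hside
    have hn' : (n:ℤ) ≤ (p:ℤ)-2 := by push_cast at hn ⊢; omega
    have hside' : x0 < 1 - lam ∨ (n:ℤ) ≤ (p:ℤ)-3 := by
      rcases hside with h | h
      · right; push_cast at h ⊢; omega
      · left; exact h
    rw [Function.iterate_succ_apply', ih (by omega) (Or.inl hn')]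
    have := ell_step hp hc hpc hlam hα hx0l hx0r (k := (n:ℤ)) (by positivity) hn' hside'
    rw [this]
    push_cast
    ring_nf

lemma r_formula (hp : 2 ≤ p) (hc : 0 < c) (hpc : (p:ℝ) * c = Real.pi / 2)
    (hlam : lam = 2 * Real.cos c) (hα : α * lam = x0 + lam)
    (hx0l : -(lam/2) ≤ x0) (hx0r : x0 ≤ 1 - lam) :
    ∀ n : ℕ, 1 ≤ n → (n:ℤ) ≤ (p:ℤ)-1 →
    (Tmap lam α)^[n] (x0 + lam) = -QQ c x0 n / QQ c x0 ((n:ℤ)-1) := by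
  intro n
  induction n with
  | zero => omega
  | succ n ih =>
    intro _ hn
    rcases Nat.eq_or_lt_of_le (by omega : 1 ≤ n + 1) with h | h
    · rw [← h]
      simpa using r_first hp hc hpc hlam hα hx0l hx0r
    · have hn1 : 1 ≤ n := by omega
      have hn' : (n:ℤ) ≤ (p:ℤ)-2 := by push_cast at hn ⊢; omega
      rw [Function.iterate_succ_apply', ih hn1 (by omega)]
      have := r_step hp hc hpc hlam hα hx0l hx0r (k := (n:ℤ)) (by exact_mod_cast hn1) hn'
      rw [this]
      push_cast
      ring_nf


lemma frac1 {A B C D : ℝ} (hB : B ≠ 0) (hD : D ≠ 0) :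
    -A/B - (-C/D) = (C*B - A*D)/(B*D) := by
  field_simp
  ring

lemma frac3 {A B E : ℝ} (hB : B ≠ 0) (hE : E ≠ 0) :
    -A/B + 1/E = -(A*E - B)/(B*E) := by
  field_simp
  ring

end Main3
end Rosen

open Rosen

set_option maxHeartbeats 2000000 in
/-- Theorem 2.2 (even case ordering of the orbits of the endpoints). -/
theorem stmt3 (p q : ℕ) (hp : 2 ≤ p) (hq : q = 2 * p) (lam α : ℝ)
    (hlam : lam = 2 * Real.cos (Real.pi / q))
    (hα1 : 1 / 2 ≤ α) (hα2 : α ≤ 1 / lam)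
    (ℓ r : ℕ → ℝ)
    (hℓ : ∀ n, ℓ n = (Tmap lam α)^[n] ((α - 1) * lam))
    (hr : ∀ n, r n = (Tmap lam α)^[n] (α * lam))
    (δ₁ : ℝ) (hδ : δ₁ = 1 / ((α + 1) * lam)) :
    -- (i)  1/2 < α < 1/λ :
    --   ℓ₀ < r₁ < ℓ₁ < ⋯ < r_{p-2} < ℓ_{p-2} < -δ₁ < r_{p-1} < 0 < ℓ_{p-1} < r₀,
    --   d_p(r₀) = d_p(ℓ₀) + 1 and ℓ_p = r_p
    (1 / 2 < α → α < 1 / lam →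
      (∀ n, 1 ≤ n → n ≤ p - 2 → ℓ (n - 1) < r n ∧ r n < ℓ n) ∧
      ℓ (p - 2) < -δ₁ ∧ -δ₁ < r (p - 1) ∧ r (p - 1) < 0 ∧ 0 < ℓ (p - 1) ∧ ℓ (p - 1) < r 0 ∧
      dfun lam α ((Tmap lam α)^[p - 1] (α * lam))
        = dfun lam α ((Tmap lam α)^[p - 1] ((α - 1) * lam)) + 1 ∧
      ℓ p = r p) ∧
    -- (ii)  α = 1/2 :
    --   ℓ₀ < r₁ = ℓ₁ < ⋯ < r_{p-2} = ℓ_{p-2} < -δ₁ < r_{p-1} = ℓ_{p-1} = 0 < r₀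
    (α = 1 / 2 →
      (∀ n, 1 ≤ n → n ≤ p - 2 → ℓ (n - 1) < r n ∧ r n = ℓ n) ∧
      ℓ (p - 2) < -δ₁ ∧ -δ₁ < r (p - 1) ∧ r (p - 1) = ℓ (p - 1) ∧ ℓ (p - 1) = 0 ∧ 0 < r 0) ∧
    -- (iii)  α = 1/λ :
    --   ℓ₀ = r₁ < ℓ₁ = r₂ < ⋯ < ℓ_{p-2} = r_{p-1} = -δ₁ < 0 < r₀
    (α = 1 / lam →
      (∀ n, 1 ≤ n → n ≤ p - 1 → ℓ (n - 1) = r n) ∧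
      (∀ n, 1 ≤ n → n ≤ p - 2 → r n < ℓ n) ∧
      r (p - 1) = -δ₁ ∧ -δ₁ < 0 ∧ 0 < r 0) := by

  have hppos : (0:ℝ) < (p:ℝ) := by positivity
  set c : ℝ := Real.pi / (2*p) with hcdef
  have hc : 0 < c := by positivity
  have hpc : (p:ℝ) * c = Real.pi / 2 := by
    rw [hcdef]; field_simp
  have hlamc : lam = 2 * Real.cos c := by
    rw [hlam, hcdef, hq]; push_cast; ring_nf
  obtain ⟨hl0, hl2, hlsq, hl1⟩ := lam_facts hp hc hpc hlamc
  set x0 : ℝ := (α - 1) * lam with hx0def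
  have hα' : α * lam = x0 + lam := by rw [hx0def]; ring
  have hx0l : -(lam/2) ≤ x0 := by rw [hx0def]; nlinarith
  have hαl1 : α * lam ≤ 1 := by
    have h := mul_le_mul_of_nonneg_right hα2 hl0.le
    rwa [one_div_mul_cancel (ne_of_gt hl0)] at h
  have hx0r : x0 ≤ 1 - lam := by rw [hx0def]; nlinarith
  have hδ' : δ₁ = 1 / (x0 + 2*lam) := by
    rw [hδ, hx0def]; ring_nf
  have hδpos : 0 < δ₁ := by rw [hδ']; apply one_div_pos.mpr; nlinarith
  have hx2l : 0 < x0 + 2*lam := by nlinarith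
  have hσ : 0 < ss c 1 := ss_pos hc hpc (le_refl 1) (by omega)
  clear_value c x0
  -- orbit formulas
  have hLf : ∀ n:ℕ, (n:ℤ) ≤ (p:ℤ)-1 → ((n:ℤ) ≤ (p:ℤ)-2 ∨ x0 < 1-lam) →
      ℓ n = -NN c x0 (n:ℤ) / NN c x0 ((n:ℤ)-1) := by
    intro n h1 h2
    rw [hℓ n]
    exact ell_formula hp hc hpc hlamc hα' hx0l hx0r n h1 h2
  have hRf : ∀ n:ℕ, 1 ≤ n → (n:ℤ) ≤ (p:ℤ)-1 →
      r n = -QQ c x0 (n:ℤ) / QQ c x0 ((n:ℤ)-1) := by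
    intro n h1 h2
    rw [hr n, show α * lam = x0 + lam from hα']
    exact r_formula hp hc hpc hlamc hα' hx0l hx0r n h1 h2
  have hr0 : r 0 = x0 + lam := by rw [hr 0, show α * lam = x0 + lam from hα']; simp
  have hcast2 : ((p-2:ℕ):ℤ) = (p:ℤ)-2 := by omega
  have hcast1 : ((p-1:ℕ):ℤ) = (p:ℤ)-1 := by omega
  -- shared chain lemmas
  have hchainL : (x0+lam)^2 < 1 → ∀ n:ℕ, 1 ≤ n → n ≤ p-2 → ℓ (n-1) < r n := by
    intro hsq n h1 h2
    have hk2 : ((n:ℤ)) ≤ (p:ℤ)-2 := by omega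
    have hLn : ℓ (n-1) = -NN c x0 ((n:ℤ)-1) / NN c x0 ((n:ℤ)-2) := by
      have := hLf (n-1) (by omega) (Or.inl (by omega))
      rw [this, show (((n-1:ℕ)):ℤ) = (n:ℤ)-1 from by omega,
        show ((n:ℤ)-1)-1 = (n:ℤ)-2 from by ring]
    have hRn : r n = -QQ c x0 (n:ℤ) / QQ c x0 ((n:ℤ)-1) := hRf n h1 (by omega)
    have hB : NN c x0 ((n:ℤ)-2) < 0 := NN_neg hp hc hpc hlamc hx0r (by omega) (by omega)
    have hD : 0 < QQ c x0 ((n:ℤ)-1) := QQ_pos hp hc hpc hlamc hx0l (by omega) (by omega)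
    have hΔ := delta_id hlamc (c := c) x0 (n:ℤ)
    have hΔpos : 0 < QQ c x0 (n:ℤ) * NN c x0 ((n:ℤ)-2) - NN c x0 ((n:ℤ)-1) * QQ c x0 ((n:ℤ)-1) := by
      rw [hΔ]; nlinarith [mul_pos (mul_pos hσ hσ) (sub_pos.mpr hsq)]
    have hkey : ℓ (n-1) - r n =
        (QQ c x0 (n:ℤ) * NN c x0 ((n:ℤ)-2) - NN c x0 ((n:ℤ)-1) * QQ c x0 ((n:ℤ)-1)) /
          (NN c x0 ((n:ℤ)-2) * QQ c x0 ((n:ℤ)-1)) := by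
      rw [hLn, hRn]
      exact frac1 (ne_of_lt hB) (ne_of_gt hD)
    have : ℓ (n-1) - r n < 0 := by
      rw [hkey]
      apply div_neg_of_pos_of_neg hΔpos
      exact mul_neg_of_neg_of_pos hB hD
    linarith
  have hchainR : -(lam/2) < x0 → ∀ n:ℕ, 1 ≤ n → n ≤ p-2 → r n < ℓ n := by
    intro hx0l' n h1 h2
    have hLn : ℓ n = -NN c x0 (n:ℤ) / NN c x0 ((n:ℤ)-1) :=
      hLf n (by omega) (Or.inl (by omega))
    have hRn : r n = -QQ c x0 (n:ℤ) / QQ c x0 ((n:ℤ)-1) := hRf n h1 (by omega)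
    have hB : NN c x0 ((n:ℤ)-1) < 0 := NN_neg hp hc hpc hlamc hx0r (by omega) (by omega)
    have hD : 0 < QQ c x0 ((n:ℤ)-1) := QQ_pos hp hc hpc hlamc hx0l (by omega) (by omega)
    have hE := e_id hlamc (c := c) x0 (n:ℤ)
    have hEpos : 0 < NN c x0 (n:ℤ) * QQ c x0 ((n:ℤ)-1) - QQ c x0 (n:ℤ) * NN c x0 ((n:ℤ)-1) := by
      rw [hE]
      have h2x : (0:ℝ) < 2*x0+lam := by linarith
      nlinarith [mul_pos (mul_pos hσ hσ) h2x]
    have hkey : ℓ n - r n =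
        (QQ c x0 (n:ℤ) * NN c x0 ((n:ℤ)-1) - NN c x0 (n:ℤ) * QQ c x0 ((n:ℤ)-1)) /
          (NN c x0 ((n:ℤ)-1) * QQ c x0 ((n:ℤ)-1)) := by
      rw [hLn, hRn]
      exact frac1 (ne_of_lt hB) (ne_of_gt hD)
    have : 0 < ℓ n - r n := by
      rw [hkey]
      apply div_pos_of_neg_of_neg (by linarith)
      exact mul_neg_of_neg_of_pos hB hD
    linarith
  have hlp2 : x0 < 1-lam → ℓ (p-2) < -δ₁ := by
    intro hx0r'
    have hLn : ℓ (p-2) = -NN c x0 ((p:ℤ)-2) / NN c x0 ((p:ℤ)-3) := by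
      have := hLf (p-2) (by omega) (Or.inl (by omega))
      rw [this, hcast2, show ((p:ℤ)-2)-1 = (p:ℤ)-3 from by ring]
    have hA : NN c x0 ((p:ℤ)-2) < 0 := NN_neg hp hc hpc hlamc hx0r (by omega) (by omega)
    have hB : NN c x0 ((p:ℤ)-3) < 0 := NN_neg hp hc hpc hlamc hx0r (by omega) (by omega)
    have hg := ell_ub_lt hp hc hpc hlamc hx0l hx0r (k := (p:ℤ)-2) (by omega) (by omega)
      (Or.inl hx0r')
    rw [show ((p:ℤ)-2)-1 = (p:ℤ)-3 from by ring] at hg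
    have hkey : ℓ (p-2) + δ₁ =
        -(NN c x0 ((p:ℤ)-2) * (x0+2*lam) - NN c x0 ((p:ℤ)-3)) /
          (NN c x0 ((p:ℤ)-3) * (x0+2*lam)) := by
      rw [hLn, hδ']
      exact frac3 (ne_of_lt hB) (ne_of_gt hx2l)
    have : ℓ (p-2) + δ₁ < 0 := by
      rw [hkey]
      apply div_neg_of_pos_of_neg (by linarith)
      exact mul_neg_of_neg_of_pos hB hx2l
    linarith
  have hrp1e : r (p-1) = -(x0+lam/2) / QQ c x0 ((p:ℤ)-2) := by
    have := hRf (p-1) (by omega) (by omega)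
    rw [this, hcast1, show ((p:ℤ)-1)-1 = (p:ℤ)-2 from by ring,
      QQ_pm1 hpc hlamc]
  have hQp2 : 0 < QQ c x0 ((p:ℤ)-2) := QQ_pos hp hc hpc hlamc hx0l (by omega) (by omega)
  have hrp1lt : (x0+lam)^2 < 1 → -δ₁ < r (p-1) := by
    intro hsq
    have hnum : (x0+lam/2)*(x0+2*lam) < QQ c x0 ((p:ℤ)-2) := by
      rw [QQ_pm2 hpc hlamc]
      nlinarith
    have hkey : r (p-1) + δ₁ =
        -((x0+lam/2)*(x0+2*lam) - QQ c x0 ((p:ℤ)-2)) / (QQ c x0 ((p:ℤ)-2) * (x0+2*lam)) := by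
      rw [hrp1e, hδ']
      exact frac3 (ne_of_gt hQp2) (ne_of_gt hx2l)
    have : 0 < r (p-1) + δ₁ := by
      rw [hkey]
      exact div_pos (by linarith) (mul_pos hQp2 hx2l)
    linarith
  refine ⟨?_, ?_, ?_⟩
  · -- case (i)
    intro hs1 hs2
    have hx0l' : -(lam/2) < x0 := by rw [hx0def]; nlinarith
    have hαl1' : α * lam < 1 := by
      have h := mul_lt_mul_of_pos_right hs2 hl0
      rwa [one_div_mul_cancel (ne_of_gt hl0)] at h
    have hx0r' : x0 < 1 - lam := by rw [hx0def]; nlinarith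
    have hsq : (x0+lam)^2 < 1 := by nlinarith
    have hNp2 : NN c x0 ((p:ℤ)-2) < 0 := NN_neg hp hc hpc hlamc hx0r (by omega) (by omega)
    have hX : 0 < x0 + lam/2 := by linarith
    have hlp1e : ℓ (p-1) = -(x0+lam/2) / NN c x0 ((p:ℤ)-2) := by
      have := hLf (p-1) (by omega) (Or.inr hx0r')
      rw [this, hcast1, show ((p:ℤ)-1)-1 = (p:ℤ)-2 from by ring, NN_pm1 hpc hlamc]
    have hrpneg : r (p-1) < 0 := by
      rw [hrp1e]; exact div_neg_of_neg_of_pos (by linarith) hQp2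
    have hlppos : 0 < ℓ (p-1) := by
      rw [hlp1e]; exact div_pos_of_neg_of_neg (by linarith) hNp2
    have hNQsum : QQ c x0 ((p:ℤ)-2) + NN c x0 ((p:ℤ)-2) = lam * (x0 + lam/2) := by
      rw [QQ_pm2 hpc hlamc, NN_pm2 hp hpc hlamc]; ring
    have hlpr0 : ℓ (p-1) < r 0 := by
      rw [hlp1e, hr0]
      have hnum2 : (x0+lam)*NN c x0 ((p:ℤ)-2) + (x0+lam/2) < 0 := by
        rw [NN_pm2 hp hpc hlamc]
        nlinarith [mul_neg_of_pos_of_neg hl0 (show (x0+lam)^2 - 1 < 0 from by linarith [hsq])]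
      have hNne' : NN c x0 ((p:ℤ)-2) ≠ 0 := ne_of_lt hNp2
      have hkey : (x0+lam) - (-(x0+lam/2) / NN c x0 ((p:ℤ)-2))
          = ((x0+lam)*NN c x0 ((p:ℤ)-2) + (x0+lam/2))/NN c x0 ((p:ℤ)-2) := by
        field_simp
        ring
      linarith [hkey, div_pos_of_neg_of_neg hnum2 hNp2]
    have hTu : (Tmap lam α)^[p-1] ((α-1)*lam) = -(x0+lam/2) / NN c x0 ((p:ℤ)-2) := by
      rw [← hx0def, ← hℓ (p-1), hlp1e]
    have hTv : (Tmap lam α)^[p-1] (α*lam) = -(x0+lam/2) / QQ c x0 ((p:ℤ)-2) := by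
      rw [← hr (p-1), hrp1e]
    have hTu' : (Tmap lam α)^[p-1] x0 = -(x0+lam/2) / NN c x0 ((p:ℤ)-2) := by
      rw [← hℓ (p-1), hlp1e]
    have hTv' : (Tmap lam α)^[p-1] (x0+lam) = -(x0+lam/2) / QQ c x0 ((p:ℤ)-2) := by
      rw [← hα', ← hr (p-1), hrp1e]
    set u := -(x0+lam/2) / NN c x0 ((p:ℤ)-2) with hudef
    set v := -(x0+lam/2) / QQ c x0 ((p:ℤ)-2) with hvdef
    clear_value u v
    have hu : 0 < u := by rw [hudef]; exact div_pos_of_neg_of_neg (by linarith) hNp2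
    have hv : v < 0 := by rw [hvdef]; exact div_neg_of_neg_of_pos (by linarith) hQp2
    have hune : u ≠ 0 := ne_of_gt hu
    have hvne : v ≠ 0 := ne_of_lt hv
    have hXne : x0 + lam/2 ≠ 0 := ne_of_gt hX
    have hNne : NN c x0 ((p:ℤ)-2) ≠ 0 := ne_of_lt hNp2
    have hQne : QQ c x0 ((p:ℤ)-2) ≠ 0 := ne_of_gt hQp2
    have hinvR : -(1/v) = 1/u + lam := by
      have h1 : 1/v = QQ c x0 ((p:ℤ)-2) / (-(x0+lam/2)) := by rw [hvdef, one_div_div]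
      have h2 : 1/u = NN c x0 ((p:ℤ)-2) / (-(x0+lam/2)) := by rw [hudef, one_div_div]
      have e1 : -(NN c x0 ((p:ℤ)-2)/(x0+lam/2)) + lam
          = (-(NN c x0 ((p:ℤ)-2)) + lam*(x0+lam/2))/(x0+lam/2) := by
        rw [← neg_div, div_add' _ _ _ hXne]
      rw [h1, h2, div_neg, div_neg, neg_neg, e1]
      congr 1
      linarith [hNQsum]
    have habsv : |1/(v*lam)| = 1/(u*lam) + 1 := by
      have hvl : v*lam < 0 := mul_neg_of_neg_of_pos hv hl0
      rw [abs_of_nonpos (one_div_nonpos.mpr hvl.le)]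
      have h1 : -(1/(v*lam)) = (-(1/v))*(1/lam) := by ring
      rw [h1, hinvR]
      field_simp
    have habsu : |1/(u*lam)| = 1/(u*lam) :=
      abs_of_nonneg (one_div_nonneg.mpr (mul_pos hu hl0).le)
    have hd : dfun lam α v = dfun lam α u + 1 := by
      unfold dfun
      rw [habsv, habsu, show 1/(u*lam) + 1 + 1 - α = (1/(u*lam) + 1 - α) + 1 from by ring,
        Int.floor_add_one]
    have hlreq : ℓ p = r p := by
      rw [hℓ p, hr p, show α*lam = x0+lam from hα', show p = (p-1)+1 from by omega,
        Function.iterate_succ_apply', Function.iterate_succ_apply', hTu', hTv']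
      unfold Tmap
      rw [if_neg hune, if_neg hvne, hd,
        abs_of_nonneg (one_div_nonneg.mpr hu.le),
        abs_of_nonpos (one_div_nonpos.mpr hv.le)]
      push_cast
      rw [hinvR]
      ring
    exact ⟨fun n h1 h2 => ⟨hchainL hsq n h1 h2, hchainR hx0l' n h1 h2⟩, hlp2 hx0r',
      hrp1lt hsq, hrpneg, hlppos, hlpr0, by rw [hTv, hTu']; exact hd, hlreq⟩
  · -- case (ii)
    intro h12
    have hx0v : x0 = -(lam/2) := by rw [hx0def, h12]; ring
    have hx0r' : x0 < 1-lam := by rw [hx0v]; linarith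
    have hsq : (x0+lam)^2 < 1 := by rw [hx0v]; nlinarith
    have hb : 0 < (lam/2)*lam := by positivity
    have hTA : Tmap lam α (lam/2) = 1/(lam/2) - lam := by
      apply Tpos hl0 (by linarith)
      · rw [h12, le_div_iff₀ hb]; nlinarith
      · rw [h12, div_lt_iff₀ hb]; nlinarith
    have hTB : Tmap lam α (-(lam/2)) = -1/(-(lam/2)) - lam := by
      apply Tneg hl0 (by linarith)
      · rw [h12, le_div_iff₀ (by rw [neg_neg]; exact hb : (0:ℝ) < -(-(lam/2))*lam)]
        nlinarith
      · rw [h12, div_lt_iff₀ (by rw [neg_neg]; exact hb : (0:ℝ) < -(-(lam/2))*lam)]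
        nlinarith
    have hT0eq : Tmap lam α (x0+lam) = Tmap lam α x0 := by
      rw [show x0+lam = lam/2 from by rw [hx0v]; ring, hx0v, hTA, hTB]
      have : -1/(-(lam/2)) = 1/(lam/2) := by
        rw [div_neg, neg_div, neg_neg]
      rw [this]
    have hreq : ∀ n, 1 ≤ n → r n = ℓ n := by
      intro n hn
      obtain ⟨m, rfl⟩ : ∃ m, n = m + 1 := ⟨n - 1, by omega⟩
      rw [hr (m+1), show α*lam = x0+lam from hα', Function.iterate_succ_apply, hT0eq,
        ← Function.iterate_succ_apply, ← hℓ (m+1)]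
    have hXz : x0 + lam/2 = 0 := by rw [hx0v]; ring
    have hrpz : r (p-1) = 0 := by rw [hrp1e, hXz]; simp
    refine ⟨fun n h1 h2 => ⟨hchainL hsq n h1 h2, hreq n h1⟩, hlp2 hx0r',
      by rw [hrpz]; linarith, hreq (p-1) (by omega), by rw [← hreq (p-1) (by omega), hrpz],
      by rw [hr0, hx0v]; linarith⟩
  · -- case (iii)
    intro h1l
    have hαl : α * lam = 1 := by rw [h1l]; field_simp
    have hx1 : x0 + lam = 1 := by rw [← hα', hαl]
    have hrfirst : Tmap lam α (α*lam) = x0 := by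
      rw [hαl]
      have h1pos : (0:ℝ) < 1/lam := by positivity
      have := Tpos hl0 (by norm_num : (0:ℝ) < 1) (x := 1) (α := α)
        (by rw [one_mul, h1l]) (by rw [one_mul, h1l]; linarith)
      rw [this]
      rw [hx0def, h1l]
      field_simp
    have heq : ∀ n, 1 ≤ n → ℓ (n-1) = r n := by
      intro n hn
      obtain ⟨m, rfl⟩ : ∃ m, n = m + 1 := ⟨n - 1, by omega⟩
      rw [hr (m+1), Function.iterate_succ_apply, hrfirst, ← hℓ m]
      simp
    have hx0l' : -(lam/2) < x0 := by linarith
    have hrpδ : r (p-1) = -δ₁ := by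
      rw [hrp1e, hδ']
      have hQval := QQ_pm2 (p := p) (c := c) hpc hlamc x0
      have hQpos : 0 < (lam/2)*x0 + 1 := by rw [← hQval]; exact hQp2
      rw [hQval, neg_div, neg_eq_iff_eq_neg, neg_neg, div_eq_div_iff (by linarith : ((lam/2)*x0+1 : ℝ) ≠ 0) (ne_of_gt hx2l)]
      linear_combination (x0+lam+1) * hx1
    exact ⟨fun n h1 _ => heq n h1, fun n h1 h2 => hchainR hx0l' n h1 h2, hrpδ,
      by linarith, by rw [hr0]; linarith⟩
end

section
/- Let q = 2h+3 with h ≥ 1 and λ = 2cos(π/q). The system of relations H_1 = 1/(λ + H_{2h+2}), H_2 = 1/λ, H_n = 1/(λ − H_{n−2}) for n = 3, 4, …, 2h+2, H_{2h+1} = λ/2, and H_{2h} + H_{2h+2} = λ, admits the unique solution H_{2n} = sin(nπ/q)/sin((n+1)π/q) for n = 1, …, h+1 and H_{2n−1} = (sin((n−1)π/q) + sin(nπ/q))/(sin(nπ/q) + sin((n+1)π/q)) for n = 1, …, h+1; in particular H_{2h+2} = 1. -/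
set_option maxHeartbeats 1000000


/-- The system of relations for the heights of the odd-index natural extension domain
(case `ρ/λ < α ≤ 1/λ`) admits the unique solution `H_{2n} = sin(nπ/q)/sin((n+1)π/q)`,
`H_{2n-1} = (sin((n-1)π/q) + sin(nπ/q))/(sin(nπ/q) + sin((n+1)π/q))`;
in particular `H_{2h+2} = 1`. -/
theorem stmt10 (h q : ℕ) (hh : 1 ≤ h) (hq : q = 2 * h + 3) (lam : ℝ)
    (hlam : lam = 2 * Real.cos (Real.pi / q)) (H : ℕ → ℝ) :
    ((H 1 = 1 / (lam + H (2 * h + 2)) ∧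
      H 2 = 1 / lam ∧
      (∀ n, 3 ≤ n → n ≤ 2 * h + 2 → H n = 1 / (lam - H (n - 2))) ∧
      H (2 * h + 1) = lam / 2 ∧
      H (2 * h) + H (2 * h + 2) = lam)
      ↔
      ((∀ n : ℕ, 1 ≤ n → n ≤ h + 1 →
          H (2 * n) = Real.sin (n * Real.pi / q) / Real.sin (((n : ℝ) + 1) * Real.pi / q)) ∧
        (∀ n : ℕ, 1 ≤ n → n ≤ h + 1 →
          H (2 * n - 1) = (Real.sin (((n : ℝ) - 1) * Real.pi / q) + Real.sin (n * Real.pi / q))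
            / (Real.sin (n * Real.pi / q) + Real.sin (((n : ℝ) + 1) * Real.pi / q))))) ∧
    ((∀ n : ℕ, 1 ≤ n → n ≤ h + 1 →
        H (2 * n) = Real.sin (n * Real.pi / q) / Real.sin (((n : ℝ) + 1) * Real.pi / q)) →
      H (2 * h + 2) = 1) := by
  have hq0 : (0:ℝ) < q := by
    have : 0 < q := by omega
    exact_mod_cast this
  have hhR : (1:ℝ) ≤ (h:ℝ) := by exact_mod_cast hh
  have hqR : (q:ℝ) = 2*(h:ℝ)+3 := by rw [hq]; push_cast; ring
  have key : ∀ x : ℝ, Real.sin ((x+1) * Real.pi / q) + Real.sin ((x-1) * Real.pi / q)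
      = lam * Real.sin (x * Real.pi / q) := by
    intro x
    have e1 : (x+1) * Real.pi / q = x * Real.pi / q + Real.pi / q := by ring
    have e2 : (x-1) * Real.pi / q = x * Real.pi / q - Real.pi / q := by ring
    rw [e1, e2, Real.sin_add, Real.sin_sub, hlam]
    ring
  have spos : ∀ x : ℝ, 1 ≤ x → x ≤ 2*(h:ℝ)+2 → 0 < Real.sin (x * Real.pi / q) := by
    intro x h1 h2
    apply Real.sin_pos_of_pos_of_lt_pi
    · have hx : 0 < x := lt_of_lt_of_le one_pos h1
      positivity
    · rw [div_lt_iff₀ hq0, hqR]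
      have := Real.pi_pos
      nlinarith
  have mirror : Real.sin (((h:ℝ)+2) * Real.pi / q) = Real.sin (((h:ℝ)+1) * Real.pi / q) := by
    have h3 : (2*(h:ℝ)+3) ≠ 0 := by positivity
    have e : ((h:ℝ)+2) * Real.pi / q = Real.pi - ((h:ℝ)+1) * Real.pi / q := by
      rw [hqR]; field_simp; ring
    rw [e, Real.sin_pi_sub]
  have hs1 : 0 < Real.sin ((1:ℝ) * Real.pi / q) := spos 1 le_rfl (by linarith)
  have hs2 : 0 < Real.sin ((2:ℝ) * Real.pi / q) := spos 2 (by norm_num) (by linarith)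
  have k1 : Real.sin ((2:ℝ) * Real.pi / q) = lam * Real.sin ((1:ℝ) * Real.pi / q) := by
    have k := key 1
    have z : ((1:ℝ)-1) * Real.pi / q = 0 := by ring
    rw [z, Real.sin_zero] at k
    norm_num at k ⊢
    linarith
  have lampos : 0 < lam := by nlinarith
  have hone : (∀ n : ℕ, 1 ≤ n → n ≤ h + 1 →
        H (2 * n) = Real.sin (n * Real.pi / q) / Real.sin (((n : ℝ) + 1) * Real.pi / q)) →
      H (2 * h + 2) = 1 := by
    intro he
    have e := he (h+1) (by omega) le_rfl
    rw [show 2*(h+1) = 2*h+2 from by ring] at e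
    push_cast at e
    rw [show ((h:ℝ)+1+1) = (h:ℝ)+2 from by ring, mirror] at e
    rw [e]
    exact div_self (ne_of_gt (spos ((h:ℝ)+1) (by linarith) (by linarith)))
  refine ⟨⟨fun ⟨e1, e2, erec, e21, esum⟩ => ?_, fun ⟨he, ho⟩ => ?_⟩, hone⟩
  · -- forward direction
    have Heven : ∀ n : ℕ, 1 ≤ n → n ≤ h + 1 →
        H (2 * n) = Real.sin (n * Real.pi / q) / Real.sin (((n : ℝ) + 1) * Real.pi / q) := by
      intro n hn1
      induction n, hn1 using Nat.le_induction with
      | base =>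
        intro _
        rw [show (2*1 : ℕ) = 2 from by norm_num, e2]
        push_cast
        rw [show ((1:ℝ)+1) = 2 from by norm_num, k1]
        rw [div_eq_div_iff lampos.ne' (mul_pos lampos hs1).ne']
        ring
      | succ n hn ih =>
        intro hle
        have ihn := ih (by omega)
        have hr := erec (2*n+2) (by omega) (by omega)
        rw [show 2*n+2-2 = 2*n from by omega] at hr
        rw [show 2*(n+1) = 2*n+2 from by ring, hr, ihn]
        push_cast
        have hnh : (n:ℝ) ≤ h := by exact_mod_cast (show n ≤ h by omega)
        have hn1R : (1:ℝ) ≤ (n:ℝ) := by exact_mod_cast hn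
        have p0 : 0 < Real.sin ((n:ℝ) * Real.pi / q) := spos _ hn1R (by linarith)
        have p1 : 0 < Real.sin (((n:ℝ)+1) * Real.pi / q) := spos _ (by linarith) (by linarith)
        have p2 : 0 < Real.sin (((n:ℝ)+1+1) * Real.pi / q) := spos _ (by linarith) (by linarith)
        have k := key ((n:ℝ)+1)
        rw [show ((n:ℝ)+1-1) * Real.pi / q = (n:ℝ) * Real.pi / q from by ring] at k
        have hd : lam - Real.sin ((n:ℝ) * Real.pi / q) / Real.sin (((n:ℝ)+1) * Real.pi / q)
            = Real.sin (((n:ℝ)+1+1) * Real.pi / q) / Real.sin (((n:ℝ)+1) * Real.pi / q) := by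
          rw [sub_eq_iff_eq_add, ← add_div, eq_div_iff p1.ne']
          linarith
        rw [hd, one_div_div]
    have h22 : H (2*h+2) = 1 := hone Heven
    have Hodd : ∀ n : ℕ, 1 ≤ n → n ≤ h + 1 →
        H (2 * n - 1) = (Real.sin (((n : ℝ) - 1) * Real.pi / q) + Real.sin (n * Real.pi / q))
          / (Real.sin (n * Real.pi / q) + Real.sin (((n : ℝ) + 1) * Real.pi / q)) := by
      intro n hn1
      induction n, hn1 using Nat.le_induction with
      | base =>
        intro _
        rw [show (2*1-1 : ℕ) = 1 from by norm_num, e1, h22]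
        push_cast
        rw [show ((1:ℝ)-1) * Real.pi / q = 0 from by ring, Real.sin_zero,
          show ((1:ℝ)+1) = 2 from by norm_num, k1]
        have d1 : (0:ℝ) < lam + 1 := by linarith
        have d2 : (0:ℝ) < Real.sin ((1:ℝ) * Real.pi / q) + lam * Real.sin ((1:ℝ) * Real.pi / q) := by
          have := mul_pos lampos hs1; linarith
        rw [div_eq_div_iff d1.ne' d2.ne']
        ring
      | succ n hn ih =>
        intro hle
        have ihn := ih (by omega)
        have hr := erec (2*n+1) (by omega) (by omega)
        rw [show 2*n+1-2 = 2*n-1 from by omega] at hr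
        rw [show 2*(n+1)-1 = 2*n+1 from by omega, hr, ihn]
        push_cast
        have hnh : (n:ℝ) ≤ h := by exact_mod_cast (show n ≤ h by omega)
        have hn1R : (1:ℝ) ≤ (n:ℝ) := by exact_mod_cast hn
        have p0 : 0 < Real.sin ((n:ℝ) * Real.pi / q) := spos _ hn1R (by linarith)
        have p1 : 0 < Real.sin (((n:ℝ)+1) * Real.pi / q) := spos _ (by linarith) (by linarith)
        have k := key ((n:ℝ))
        have k' := key ((n:ℝ)+1)
        rw [show ((n:ℝ)+1-1) * Real.pi / q = (n:ℝ) * Real.pi / q from by ring] at k'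
        have hd : lam - (Real.sin (((n:ℝ)-1) * Real.pi / q) + Real.sin ((n:ℝ) * Real.pi / q))
              / (Real.sin ((n:ℝ) * Real.pi / q) + Real.sin (((n:ℝ)+1) * Real.pi / q))
            = (Real.sin (((n:ℝ)+1) * Real.pi / q) + Real.sin (((n:ℝ)+1+1) * Real.pi / q))
              / (Real.sin ((n:ℝ) * Real.pi / q) + Real.sin (((n:ℝ)+1) * Real.pi / q)) := by
          rw [sub_eq_iff_eq_add, ← add_div, eq_div_iff (by linarith : (0:ℝ) <
            Real.sin ((n:ℝ) * Real.pi / q) + Real.sin (((n:ℝ)+1) * Real.pi / q)).ne']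
          linarith
        rw [show ((n:ℝ)+1-1) * Real.pi / q = (n:ℝ) * Real.pi / q from by ring, hd, one_div_div]
    exact ⟨Heven, Hodd⟩
  · -- backward direction
    have h22 : H (2*h+2) = 1 := hone he
    refine ⟨?_, ?_, ?_, ?_, ?_⟩
    · -- H 1
      have o1 := ho 1 le_rfl (by omega)
      rw [show (2*1-1 : ℕ) = 1 from by norm_num] at o1
      push_cast at o1
      rw [show ((1:ℝ)-1) * Real.pi / q = 0 from by ring, Real.sin_zero,
        show ((1:ℝ)+1) = 2 from by norm_num] at o1
      rw [o1, h22, k1]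
      have d1 : (0:ℝ) < lam + 1 := by linarith
      have d2 : (0:ℝ) < Real.sin ((1:ℝ) * Real.pi / q) + lam * Real.sin ((1:ℝ) * Real.pi / q) := by
        have := mul_pos lampos hs1; linarith
      rw [div_eq_div_iff d2.ne' d1.ne']
      ring
    · -- H 2
      have e1' := he 1 le_rfl (by omega)
      rw [show (2*1 : ℕ) = 2 from by norm_num] at e1'
      push_cast at e1'
      rw [show ((1:ℝ)+1) = 2 from by norm_num] at e1'
      rw [e1', k1]
      rw [div_eq_div_iff (mul_pos lampos hs1).ne' lampos.ne']
      ring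
    · -- recursion
      intro n h3 hle
      rcases Nat.even_or_odd n with ⟨m, hm⟩ | ⟨m, hm⟩
      · -- n even
        obtain ⟨j, rfl⟩ : ∃ j, m = j + 2 := ⟨m - 2, by omega⟩
        subst hm
        have ha := he (j+2) (by omega) (by omega)
        have hb := he (j+1) (by omega) (by omega)
        rw [show (j+2)+(j+2) = 2*(j+2) from by ring, show 2*(j+2)-2 = 2*(j+1) from by omega,
          ha, hb]
        push_cast
        have hjh : (j:ℝ)+1 ≤ h := by exact_mod_cast (show j+1 ≤ h by omega)
        have hj0 : (0:ℝ) ≤ (j:ℝ) := Nat.cast_nonneg j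
        have p0 : 0 < Real.sin (((j:ℝ)+1) * Real.pi / q) := spos _ (by linarith) (by linarith)
        have p1 : 0 < Real.sin (((j:ℝ)+1+1) * Real.pi / q) := spos _ (by linarith) (by linarith)
        have p2 : 0 < Real.sin (((j:ℝ)+2+1) * Real.pi / q) := spos _ (by linarith) (by linarith)
        have k := key ((j:ℝ)+2)
        rw [show ((j:ℝ)+2-1) * Real.pi / q = ((j:ℝ)+1) * Real.pi / q from by ring,
          show ((j:ℝ)+2) * Real.pi / q = ((j:ℝ)+1+1) * Real.pi / q from by ring] at k
        have hd : lam - Real.sin (((j:ℝ)+1) * Real.pi / q) / Real.sin (((j:ℝ)+1+1) * Real.pi / q)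
            = Real.sin (((j:ℝ)+2+1) * Real.pi / q) / Real.sin (((j:ℝ)+1+1) * Real.pi / q) := by
          rw [sub_eq_iff_eq_add, ← add_div, eq_div_iff p1.ne']
          linarith
        rw [hd, one_div_div,
          show ((j:ℝ)+2) * Real.pi / q = ((j:ℝ)+1+1) * Real.pi / q from by ring]
      · -- n odd
        obtain ⟨j, rfl⟩ : ∃ j, m = j + 1 := ⟨m - 1, by omega⟩
        subst hm
        have ha := ho (j+2) (by omega) (by omega)
        have hb := ho (j+1) (by omega) (by omega)
        rw [show 2*(j+1)+1 = 2*(j+2)-1 from by omega, show 2*(j+2)-1-2 = 2*(j+1)-1 from by omega,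
          ha, hb]
        push_cast
        have hjh : (j:ℝ)+1 ≤ h := by exact_mod_cast (show j+1 ≤ h by omega)
        have hj0 : (0:ℝ) ≤ (j:ℝ) := Nat.cast_nonneg j
        have p0 : 0 < Real.sin (((j:ℝ)+1) * Real.pi / q) := spos _ (by linarith) (by linarith)
        have p1 : 0 < Real.sin (((j:ℝ)+1+1) * Real.pi / q) := spos _ (by linarith) (by linarith)
        have p2 : 0 < Real.sin (((j:ℝ)+2+1) * Real.pi / q) := spos _ (by linarith) (by linarith)
        have k := key ((j:ℝ)+1)
        have k' := key ((j:ℝ)+2)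
        rw [show ((j:ℝ)+2-1) * Real.pi / q = ((j:ℝ)+1) * Real.pi / q from by ring,
          show ((j:ℝ)+2) * Real.pi / q = ((j:ℝ)+1+1) * Real.pi / q from by ring] at k'
        have hd : lam - (Real.sin (((j:ℝ)+1-1) * Real.pi / q) + Real.sin (((j:ℝ)+1) * Real.pi / q))
              / (Real.sin (((j:ℝ)+1) * Real.pi / q) + Real.sin (((j:ℝ)+1+1) * Real.pi / q))
            = (Real.sin (((j:ℝ)+1+1) * Real.pi / q) + Real.sin (((j:ℝ)+2+1) * Real.pi / q))
              / (Real.sin (((j:ℝ)+1) * Real.pi / q) + Real.sin (((j:ℝ)+1+1) * Real.pi / q)) := by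
          rw [sub_eq_iff_eq_add, ← add_div, eq_div_iff (by linarith : (0:ℝ) <
            Real.sin (((j:ℝ)+1) * Real.pi / q) + Real.sin (((j:ℝ)+1+1) * Real.pi / q)).ne']
          linarith
        rw [hd, one_div_div,
          show ((j:ℝ)+2-1) * Real.pi / q = ((j:ℝ)+1) * Real.pi / q from by ring,
          show ((j:ℝ)+2) * Real.pi / q = ((j:ℝ)+1+1) * Real.pi / q from by ring]
    · -- H (2h+1)
      have ha := ho (h+1) (by omega) le_rfl
      rw [show 2*(h+1)-1 = 2*h+1 from by omega] at ha
      push_cast at ha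
      rw [show ((h:ℝ)+1-1) * Real.pi / q = (h:ℝ) * Real.pi / q from by ring,
        show ((h:ℝ)+1+1) = (h:ℝ)+2 from by ring, mirror] at ha
      rw [ha]
      have k := key ((h:ℝ)+1)
      rw [show ((h:ℝ)+1+1) = (h:ℝ)+2 from by ring,
        show ((h:ℝ)+1-1) * Real.pi / q = (h:ℝ) * Real.pi / q from by ring, mirror] at k
      have p1 : 0 < Real.sin (((h:ℝ)+1) * Real.pi / q) := spos _ (by linarith) (by linarith)
      rw [div_eq_div_iff (by linarith : (0:ℝ) <
        Real.sin (((h:ℝ)+1) * Real.pi / q) + Real.sin (((h:ℝ)+1) * Real.pi / q)).ne'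
        (two_ne_zero)]
      linarith
    · -- sum
      have ea := he h hh (by omega)
      rw [ea, h22]
      have k := key ((h:ℝ)+1)
      rw [show ((h:ℝ)+1+1) = (h:ℝ)+2 from by ring,
        show ((h:ℝ)+1-1) * Real.pi / q = (h:ℝ) * Real.pi / q from by ring, mirror] at k
      have p1 : 0 < Real.sin (((h:ℝ)+1) * Real.pi / q) := spos _ (by linarith) (by linarith)
      rw [div_add_one p1.ne', div_eq_iff p1.ne']
      linarith
end
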